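/- Let G be a cumulative distribution function on ℝ₊ with mean γ⁻¹ = ∫₀^∞ Gᶜ(s) ds < ∞, F a c.d.f. with mean μ⁻¹ < ∞, G₀ the equilibrium distribution of G (G₀(t) = γ∫₀ᵗ Gᶜ(s) ds), and Ψ₀(t) = ∫₀ᵗ Fᶜ(t−u) dG₀(u), Ψ(t) = ∫₀ᵗ Fᶜ(t−u) dG(u). Then for all t ≥ 0, γ⁻¹Ψ₀(t) + ∫₀ᵗ Ψ(s) ds = ∫₀ᵗ Fᶜ(s) ds. -/

import Mathlib

open MeasureTheory Set

/-- The identity `γ⁻¹ Ψ₀(t) + ∫₀ᵗ Ψ(s) ds = ∫₀ᵗ Fᶜ(s) ds`, where `G₀` is the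
equilibrium distribution of `G` (so that `dG₀(u) = γ Gᶜ(u) du`),
`Ψ₀(t) = ∫₀ᵗ Fᶜ(t-u) dG₀(u)` and `Ψ(t) = ∫ Fᶜ(t-u) dG(u)`. -/
theorem equilibrium_psi_identity
    (γ μ : ℝ) (hγ : 0 < γ) (hμ : 0 < μ)
    (F : ℝ → ℝ) (hFmono : Monotone F) (hF01 : ∀ s, F s ∈ Set.Icc (0:ℝ) 1)
    (hFneg : ∀ s < (0:ℝ), F s = 0)
    (hFmean : (∫ s in Set.Ioi (0:ℝ), (1 - F s)) = μ⁻¹)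
    (G : StieltjesFunction ℝ) (hGneg : ∀ s ≤ (0:ℝ), G s = 0) (hG1 : ∀ s, G s ≤ 1)
    (hGmean : (∫ s in Set.Ioi (0:ℝ), (1 - G s)) = γ⁻¹)
    (t : ℝ) (ht : 0 ≤ t) :
    γ⁻¹ * (∫ u in (0:ℝ)..t, (1 - F (t - u)) * (γ * (1 - G u)))
      + (∫ s in (0:ℝ)..t, (∫ u in Set.Iic s, (1 - F (s - u)) ∂G.measure))
      = ∫ s in (0:ℝ)..t, (1 - F s) := by
  have hF0 : ∀ s, 0 ≤ F s := fun s => (hF01 s).1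
  have hF1 : ∀ s, F s ≤ 1 := fun s => (hF01 s).2
  have hG0 : ∀ s, 0 ≤ G s := by
    intro s
    rcases le_or_gt s 0 with h | h
    · exact (hGneg s h).ge
    · exact (hGneg 0 le_rfl) ▸ G.mono h.le
  have hFmble : Measurable F := hFmono.measurable
  have hGmble : Measurable (G : ℝ → ℝ) := G.mono.measurable
  have hGbot : Filter.Tendsto G Filter.atBot (nhds 0) := by
    refine Filter.Tendsto.congr' ?_ (tendsto_const_nhds (α := ℝ))
    exact Filter.eventually_atBot.2 ⟨0, fun s hs => (hGneg s hs).symm⟩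
  have hGIic : ∀ x, G.measure (Iic x) = ENNReal.ofReal (G x) := fun x => by
    rw [G.measure_Iic hGbot x, sub_zero]
  have hGIic0 : G.measure (Iic 0) = 0 := by
    simp [hGIic 0, hGneg 0 le_rfl]
  haveI : IsFiniteMeasure G.measure :=
    G.isFiniteMeasure hGbot
      (tendsto_atTop_ciSup G.mono ⟨1, forall_mem_range.2 hG1⟩)
  haveI : IsFiniteMeasure (volume.restrict (Ioc (0:ℝ) t)) := by
    constructor
    rw [Measure.restrict_apply_univ, Real.volume_Ioc]
    exact ENNReal.ofReal_lt_top
  -- interval integrability of bounded measurable functions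
  have hII : ∀ f : ℝ → ℝ, Measurable f → (∀ x, |f x| ≤ 1) →
      IntervalIntegrable f volume 0 t := by
    intro f hf hb
    rw [intervalIntegrable_iff]
    exact Measure.integrableOn_of_bounded measure_Ioc_lt_top.ne
      hf.aestronglyMeasurable (Filter.Eventually.of_forall fun x => hb x)
  -- Step 1 : pull out γ
  have h1 : (∫ u in (0:ℝ)..t, (1 - F (t - u)) * (γ * (1 - G u)))
      = γ * ∫ u in (0:ℝ)..t, (1 - F (t - u)) * (1 - G u) := by
    rw [← intervalIntegral.integral_const_mul]
    exact intervalIntegral.integral_congr fun u _ => by ring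
  -- Step 2 : split the product
  have hmFt : Measurable (fun u : ℝ => 1 - F (t - u)) :=
    measurable_const.sub (hFmble.comp (measurable_const.sub measurable_id))
  have hIA : IntervalIntegrable (fun u => 1 - F (t - u)) volume 0 t :=
    hII _ hmFt (fun x => by
      rw [abs_le]; constructor <;> nlinarith [hF0 (t - x), hF1 (t - x)])
  have hIb : IntervalIntegrable (fun u => (1 - F (t - u)) * G u) volume 0 t :=
    hII _ (hmFt.mul hGmble) (fun x => by
      rw [abs_le]
      constructor <;> nlinarith [hF0 (t - x), hF1 (t - x), hG0 x, hG1 x])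
  have h2 : (∫ u in (0:ℝ)..t, (1 - F (t - u)) * (1 - G u))
      = (∫ u in (0:ℝ)..t, (1 - F (t - u)))
        - ∫ u in (0:ℝ)..t, (1 - F (t - u)) * G u := by
    rw [← intervalIntegral.integral_sub hIA hIb]
    exact intervalIntegral.integral_congr fun u _ => by ring
  -- Step 3 : substitution u ↦ t - u in the first integral
  have h3 : (∫ u in (0:ℝ)..t, (1 - F (t - u))) = ∫ s in (0:ℝ)..t, (1 - F s) := by
    have := intervalIntegral.integral_comp_sub_left (a := (0:ℝ)) (b := t)
      (fun s => 1 - F s) t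
    simpa using this
  -- Step 4 : substitution in the second integral
  have h4 : (∫ u in (0:ℝ)..t, (1 - F (t - u)) * G u)
      = ∫ v in (0:ℝ)..t, (1 - F v) * G (t - v) := by
    have := intervalIntegral.integral_comp_sub_left (a := (0:ℝ)) (b := t)
      (fun v => (1 - F v) * G (t - v)) t
    simp only [sub_sub_cancel, sub_zero, sub_self] at this
    rw [← this]
  -- Main step : the double integral
  have h5 : (∫ s in (0:ℝ)..t, (∫ u in Set.Iic s, (1 - F (s - u)) ∂G.measure))
      = ∫ v in (0:ℝ)..t, (1 - F v) * G (t - v) := by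
    set K : ℝ × ℝ → ℝ :=
      fun p => indicator {q : ℝ × ℝ | q.2 ≤ q.1} (fun q => 1 - F (q.1 - q.2)) p with hK
    set L : ℝ × ℝ → ℝ :=
      fun p => indicator {q : ℝ × ℝ | q.1 ≤ t - q.2} (fun q => 1 - F q.2) p with hL
    have hKmble : Measurable K :=
      (measurable_const.sub (hFmble.comp (measurable_fst.sub measurable_snd))).indicator
        (measurableSet_le measurable_snd measurable_fst)
    have hLmble : Measurable L :=
      (measurable_const.sub (hFmble.comp measurable_snd)).indicator
        (measurableSet_le measurable_fst (measurable_const.sub measurable_snd))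
    have hKbd : ∀ p, |K p| ≤ 1 := by
      intro p
      simp only [hK, indicator]
      split_ifs with h
      · rw [abs_le]
        constructor <;> nlinarith [hF0 (p.1 - p.2), hF1 (p.1 - p.2)]
      · simp
    have hLbd : ∀ p, |L p| ≤ 1 := by
      intro p
      simp only [hL, indicator]
      split_ifs with h
      · rw [abs_le]
        constructor <;> nlinarith [hF0 p.2, hF1 p.2]
      · simp
    have hKint : Integrable (Function.uncurry fun s u => K (s, u))
        ((volume.restrict (Ioc (0:ℝ) t)).prod G.measure) := by
      refine (integrable_const (1:ℝ)).mono' ?_ ?_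
      · exact (hKmble.comp measurable_id).aestronglyMeasurable
      · exact Filter.Eventually.of_forall fun p => by simpa [Function.uncurry] using hKbd p
    have hLint : Integrable (Function.uncurry fun u v => L (u, v))
        (G.measure.prod (volume.restrict (Ioc (0:ℝ) t))) := by
      refine (integrable_const (1:ℝ)).mono' ?_ ?_
      · exact (hLmble.comp measurable_id).aestronglyMeasurable
      · exact Filter.Eventually.of_forall fun p => by simpa [Function.uncurry] using hLbd p
    have inner1 : ∀ s : ℝ, (∫ u in Set.Iic s, (1 - F (s - u)) ∂G.measure)
        = ∫ u, K (s, u) ∂G.measure := by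
      intro s
      rw [← integral_indicator measurableSet_Iic]
      refine integral_congr_ae (Filter.Eventually.of_forall fun u => ?_)
      by_cases h : u ≤ s <;> simp [hK, indicator, h]
    have hae : ∀ᵐ u ∂G.measure, 0 < u := by
      rw [ae_iff]
      convert hGIic0 using 2
      ext u
      simp [not_lt]
    have key : ∀ u : ℝ, 0 < u →
        (∫ s in Ioc (0:ℝ) t, K (s, u)) = ∫ v in Ioc (0:ℝ) t, L (u, v) := by
      intro u hu
      have hsK : (fun s => K (s, u)) = indicator (Ici u) (fun s => 1 - F (s - u)) := by
        ext s
        by_cases h : u ≤ s <;> simp [hK, indicator, h]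
      have hvL : (fun v => L (u, v)) = indicator (Iic (t - u)) (fun v => 1 - F v) := by
        ext v
        by_cases h : u ≤ t - v
        · have h' : v ≤ t - u := by linarith
          simp [hL, indicator, h, h']
        · have h' : ¬ v ≤ t - u := by intro hc; exact h (by linarith)
          simp [hL, indicator, h, h']
      rw [hsK, hvL, setIntegral_indicator measurableSet_Ici,
        setIntegral_indicator measurableSet_Iic]
      have e1 : Ioc (0:ℝ) t ∩ Ici u = Icc u t := by
        ext s
        simp only [mem_inter_iff, mem_Ioc, mem_Ici, mem_Icc]
        constructor
        · rintro ⟨⟨_, h2⟩, h3⟩; exact ⟨h3, h2⟩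
        · rintro ⟨h1, h2⟩; exact ⟨⟨lt_of_lt_of_le hu h1, h2⟩, h1⟩
      have e2 : Ioc (0:ℝ) t ∩ Iic (t - u) = Ioc 0 (t - u) := by
        rw [Ioc_inter_Iic, min_eq_right (by linarith)]
      rw [e1, e2, integral_Icc_eq_integral_Ioc]
      rcases le_or_gt u t with h | h
      · rw [← intervalIntegral.integral_of_le h,
          ← intervalIntegral.integral_of_le (by linarith : (0:ℝ) ≤ t - u)]
        have := intervalIntegral.integral_comp_sub_right (a := u) (b := t)
          (fun v => 1 - F v) u
        simpa using this
      · rw [Ioc_eq_empty (not_lt.2 h.le), Ioc_eq_empty (not_lt.2 (by linarith : t - u ≤ 0))]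
        simp
    rw [intervalIntegral.integral_of_le ht, intervalIntegral.integral_of_le ht]
    calc (∫ s in Ioc (0:ℝ) t, (∫ u in Set.Iic s, (1 - F (s - u)) ∂G.measure))
        = ∫ s in Ioc (0:ℝ) t, ∫ u, K (s, u) ∂G.measure := by simp_rw [inner1]
      _ = ∫ u, (∫ s in Ioc (0:ℝ) t, K (s, u)) ∂G.measure :=
          integral_integral_swap hKint
      _ = ∫ u, (∫ v in Ioc (0:ℝ) t, L (u, v)) ∂G.measure := by
          refine integral_congr_ae ?_
          filter_upwards [hae] with u hu
          exact key u hu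
      _ = ∫ v in Ioc (0:ℝ) t, (∫ u, L (u, v) ∂G.measure) :=
          integral_integral_swap hLint
      _ = ∫ v in Ioc (0:ℝ) t, (1 - F v) * G (t - v) := by
          refine setIntegral_congr_fun measurableSet_Ioc (fun v _ => ?_)
          have huL : (fun u => L (u, v)) = indicator (Iic (t - v)) (fun _ => 1 - F v) := by
            ext u
            by_cases h : u ≤ t - v <;> simp [hL, indicator, h]
          rw [huL, integral_indicator measurableSet_Iic, setIntegral_const, measureReal_def, hGIic,
            ENNReal.toReal_ofReal (hG0 _)]
          simp [mul_comm]
  rw [h1, h5, h2, h3, h4]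
  field_simp
  ring
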